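/- Let g = g₁^{m₁} ⋯ g_r^{m_r} ∈ ℂ[x₁,…,xₙ] be a factorization into irreducibles and w ∈ ℂⁿ. The following are equivalent: (a) g is w-homogeneous; (b) each g_k is w-homogeneous; (c) the reduced polynomial g_red = g₁ ⋯ g_r is w-homogeneous. -/

import Mathlib

open MvPolynomial

/-- `g` is `w`-homogeneous when `∑ i, w i • x i ∂ i • g = λ g` for some `λ`. -/
def IsWHomogeneous (n : ℕ) (w : Fin n → ℂ) (g : MvPolynomial (Fin n) ℂ) : Prop :=
  ∃ lam : ℂ, (∑ i, C (w i) * X i * pderiv i g) = C lam * g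

namespace WHomAux

variable {n : ℕ} (w : Fin n → ℂ)

/-- weighted degree of a monomial -/
noncomputable def v (d : Fin n →₀ ℕ) : ℂ := ∑ i, w i * (d i : ℂ)

lemma v_add (a b : Fin n →₀ ℕ) : v w (a + b) = v w a + v w b := by
  simp [v, Finsupp.add_apply, mul_add, Finset.sum_add_distrib]

lemma D_monomial (d : Fin n →₀ ℕ) (c : ℂ) :
    (∑ i, C (w i) * X i * pderiv i (monomial d c : MvPolynomial (Fin n) ℂ))
      = C (v w d) * monomial d c := by
  have h : ∀ i : Fin n, C (w i) * X i * pderiv i (monomial d c : MvPolynomial (Fin n) ℂ)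
      = C (w i * (d i : ℂ)) * monomial d c := by
    intro i
    rw [pderiv_monomial]
    by_cases h : d i = 0
    · simp [h]
    · have hd : Finsupp.single i 1 + (d - Finsupp.single i 1) = d := by
        ext j
        simp only [Finsupp.add_apply, Finsupp.tsub_apply, Finsupp.single_apply]
        split_ifs with hij
        · subst hij; omega
        · omega
      rw [X, mul_assoc, monomial_mul, hd, C_mul_monomial, C_mul_monomial]
      ring_nf
  rw [Finset.sum_congr rfl (fun i _ => h i), ← Finset.sum_mul, v, map_sum]

lemma D_apply (p : MvPolynomial (Fin n) ℂ) :
    (∑ i, C (w i) * X i * pderiv i p)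
      = ∑ d ∈ p.support, C (v w d) * monomial d (coeff d p) := by
  conv_lhs => rw [p.as_sum]
  simp only [map_sum, Finset.mul_sum]
  rw [Finset.sum_comm]
  exact Finset.sum_congr rfl fun d _ => D_monomial w d (coeff d p)

lemma coeff_D (p : MvPolynomial (Fin n) ℂ) (e : Fin n →₀ ℕ) :
    coeff e (∑ i, C (w i) * X i * pderiv i p) = v w e * coeff e p := by
  rw [D_apply, coeff_sum]
  simp only [coeff_C_mul, coeff_monomial, mul_ite, mul_zero]
  rw [Finset.sum_ite_eq' p.support e fun d => v w d * coeff d p]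
  by_cases h : e ∈ p.support
  · rw [if_pos h]
  · rw [if_neg h, notMem_support_iff.mp h, mul_zero]

lemma isWH_iff (p : MvPolynomial (Fin n) ℂ) :
    IsWHomogeneous n w p ↔ ∃ lam : ℂ, ∀ d ∈ p.support, v w d = lam := by
  constructor
  · rintro ⟨lam, hl⟩
    refine ⟨lam, fun d hd => ?_⟩
    have := congrArg (coeff d) hl
    rw [coeff_D, coeff_C_mul] at this
    exact mul_right_cancel₀ (mem_support_iff.mp hd) this
  · rintro ⟨lam, hl⟩
    refine ⟨lam, MvPolynomial.ext _ _ fun d => ?_⟩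
    rw [coeff_D, coeff_C_mul]
    by_cases h : d ∈ p.support
    · rw [hl d h]
    · rw [notMem_support_iff.mp h, mul_zero, mul_zero]

lemma isWH_mul {f h : MvPolynomial (Fin n) ℂ} (hf : IsWHomogeneous n w f)
    (hh : IsWHomogeneous n w h) : IsWHomogeneous n w (f * h) := by
  classical
  rw [isWH_iff] at hf hh ⊢
  obtain ⟨a, ha⟩ := hf
  obtain ⟨b, hb⟩ := hh
  refine ⟨a + b, fun d hd => ?_⟩
  obtain ⟨d₁, hd₁, d₂, hd₂, rfl⟩ := Finset.mem_add.mp (MvPolynomial.support_mul f h hd)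
  rw [v_add, ha d₁ hd₁, hb d₂ hd₂]

lemma isWH_one : IsWHomogeneous n w 1 := by
  rw [isWH_iff]
  refine ⟨0, fun d hd => ?_⟩
  have : d = 0 := by
    by_contra hne
    exact (mem_support_iff.mp hd) (by simp [coeff_one, Ne.symm hne])
  subst this
  simp [v]

lemma isWH_pow {f : MvPolynomial (Fin n) ℂ} (hf : IsWHomogeneous n w f) (j : ℕ) :
    IsWHomogeneous n w (f ^ j) := by
  induction j with
  | zero => simpa using isWH_one w
  | succ k ih => rw [pow_succ]; exact isWH_mul w ih hf

/-- Key lemma: a top (w.r.t. an arbitrary additive linear order) monomial of a product. -/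
lemma exists_top {M : Type} [AddCommMonoid M] [LinearOrder M] [IsOrderedCancelAddMonoid M]
    (u : (Fin n →₀ ℕ) → M) (hu : ∀ a b, u (a + b) = u a + u b)
    {f h : MvPolynomial (Fin n) ℂ} (hf : f ≠ 0) (hh : h ≠ 0) :
    ∃ d₁ ∈ f.support, ∃ d₂ ∈ h.support, (d₁ + d₂) ∈ (f * h).support ∧
      (∀ e ∈ f.support, u e ≤ u d₁) ∧ (∀ e ∈ h.support, u e ≤ u d₂) := by
  classical
  set T : (Fin n →₀ ℕ) → Lex (M × Lex (Fin n →₀ ℕ)) :=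
    fun d => toLex (u d, toLex d) with hT
  have hTadd : ∀ a b, T (a + b) = T a + T b := by
    intro a b
    simp [hT, hu]
    rfl
  have hTinj : Function.Injective T := by
    intro a b hab
    have := congrArg (fun x => (ofLex x).2) hab
    simpa [hT] using this
  obtain ⟨d₁, hd₁, hmax₁⟩ := Finset.exists_max_image f.support T (support_nonempty.mpr hf)
  obtain ⟨d₂, hd₂, hmax₂⟩ := Finset.exists_max_image h.support T (support_nonempty.mpr hh)
  have hmem : (d₁ + d₂) ∈ (f * h).support := by
    rw [mem_support_iff, coeff_mul]
    rw [Finset.sum_eq_single_of_mem (d₁, d₂) (Finset.HasAntidiagonal.mem_antidiagonal.mpr rfl)]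
    · exact mul_ne_zero (mem_support_iff.mp hd₁) (mem_support_iff.mp hd₂)
    · rintro ⟨a, b⟩ hab hne
      by_contra hc
      have ha : a ∈ f.support := mem_support_iff.mpr fun h0 => hc (by simp [h0])
      have hb : b ∈ h.support := mem_support_iff.mpr fun h0 => hc (by simp [h0])
      have hsum : T a + T b = T d₁ + T d₂ := by
        rw [← hTadd, ← hTadd, Finset.HasAntidiagonal.mem_antidiagonal.mp hab]
      have h1 : T a = T d₁ := by
        by_contra hne1
        have : T a < T d₁ := lt_of_le_of_ne (hmax₁ a ha) hne1
        exact absurd hsum (ne_of_lt (add_lt_add_of_lt_of_le this (hmax₂ b hb)))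
      have h2 : T b = T d₂ := by
        have := add_left_cancel (h1 ▸ hsum)
        exact this
      exact hne (Prod.ext (hTinj h1) (hTinj h2))
  refine ⟨d₁, hd₁, d₂, hd₂, hmem, fun e he => ?_, fun e he => ?_⟩
  · rcases Prod.Lex.le_iff.mp (hmax₁ e he) with h' | h'
    · exact le_of_lt h'
    · exact le_of_eq h'.1
  · rcases Prod.Lex.le_iff.mp (hmax₂ e he) with h' | h'
    · exact le_of_lt h'
    · exact le_of_eq h'.1


lemma v_eq_of_u_eq {a b : Fin n →₀ ℕ}
    (h : toLex ((v w a).re, (v w a).im) = toLex ((v w b).re, (v w b).im)) :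
    v w a = v w b := by
  have h1 := congrArg (fun x => (ofLex x).1) h
  have h2 := congrArg (fun x => (ofLex x).2) h
  simp only [ofLex_toLex] at h1 h2
  exact Complex.ext h1 h2

lemma isWH_of_mul {f h : MvPolynomial (Fin n) ℂ} (hf : f ≠ 0) (hh : h ≠ 0)
    (hfh : IsWHomogeneous n w (f * h)) : IsWHomogeneous n w f := by
  rw [isWH_iff] at hfh ⊢
  obtain ⟨lam, hlam⟩ := hfh
  have huadd : ∀ a b : Fin n →₀ ℕ,
      (toLex ((v w (a + b)).re, (v w (a + b)).im) : Lex (ℝ × ℝ))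
        = toLex ((v w a).re, (v w a).im) + toLex ((v w b).re, (v w b).im) := by
    intro a b
    rw [v_add]
    rfl
  obtain ⟨d₁, hd₁, d₂, hd₂, hmem, hmax₁, hmax₂⟩ :=
    exists_top (M := Lex (ℝ × ℝ)) (fun d => toLex ((v w d).re, (v w d).im)) huadd hf hh
  obtain ⟨e₁, he₁, e₂, he₂, hmem', hmin₁, hmin₂⟩ :=
    exists_top (M := (Lex (ℝ × ℝ))ᵒᵈ)
      (fun d => OrderDual.toDual (toLex ((v w d).re, (v w d).im)))
      (fun a b => congrArg OrderDual.toDual (huadd a b)) hf hh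
  set u : (Fin n →₀ ℕ) → Lex (ℝ × ℝ) := fun d => toLex ((v w d).re, (v w d).im) with hudef
  have hsum : u d₁ + u d₂ = u e₁ + u e₂ := by
    rw [← huadd, ← huadd]
    have h1 : v w (d₁ + d₂) = lam := hlam _ hmem
    have h2 : v w (e₁ + e₂) = lam := hlam _ hmem'
    simp only [hudef, h1, h2]
  have hle₁ : u e₁ ≤ u d₁ := hmin₁ d₁ hd₁
  have hle₂ : u e₂ ≤ u d₂ := hmin₂ d₂ hd₂
  have heq₁ : u d₁ = u e₁ := by
    by_contra hne
    exact absurd hsum.symm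
      (ne_of_lt (add_lt_add_of_lt_of_le (lt_of_le_of_ne hle₁ fun h => hne h.symm) hle₂))
  refine ⟨v w d₁, fun d hd => ?_⟩
  have hud : u d = u d₁ := by
    have h1 : u d ≤ u d₁ := hmax₁ d hd
    have h2 : u e₁ ≤ u d := hmin₁ d hd
    exact le_antisymm h1 (heq₁ ▸ h2)
  exact v_eq_of_u_eq w hud

lemma main_aux (r : ℕ) (g : Fin r → MvPolynomial (Fin n) ℂ) (m : Fin r → ℕ)
    (hg0 : ∀ k, g k ≠ 0) (hm : ∀ k, 1 ≤ m k) :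
    IsWHomogeneous n w (∏ k, g k ^ m k) ↔ ∀ k, IsWHomogeneous n w (g k) := by
  constructor
  · intro hP k
    have hfac : (∏ l, g l ^ m l)
        = g k * (g k ^ (m k - 1) * ∏ l ∈ Finset.univ.erase k, g l ^ m l) := by
      rw [← Finset.mul_prod_erase Finset.univ (fun l => g l ^ m l) (Finset.mem_univ k),
        ← mul_assoc]
      congr 1
      conv_lhs => rw [show m k = (m k - 1) + 1 from (Nat.succ_pred_eq_of_pos (hm k)).symm]
      rw [pow_succ']
    have hco : (g k ^ (m k - 1) * ∏ l ∈ Finset.univ.erase k, g l ^ m l) ≠ 0 := by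
      apply mul_ne_zero (pow_ne_zero _ (hg0 k))
      rw [Finset.prod_ne_zero_iff]
      exact fun l _ => pow_ne_zero _ (hg0 l)
    exact isWH_of_mul w (hg0 k) hco (hfac ▸ hP)
  · intro hb
    exact Finset.prod_induction _ (IsWHomogeneous n w) (fun a b => isWH_mul w) (isWH_one w)
      (fun k _ => isWH_pow w (hb k) (m k))

end WHomAux

/-- For `g = g₁^{m₁} ⋯ g_r^{m_r}` a factorization into pairwise non-associate
irreducibles with all `m k ≥ 1`, the following are equivalent:
(a) `g` is `w`-homogeneous; (b) each `g k` is `w`-homogeneous;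
(c) `g_red = g₁ ⋯ g_r` is `w`-homogeneous. -/
theorem wHomogeneous_iff_factors (n r : ℕ) (w : Fin n → ℂ)
    (g : Fin r → MvPolynomial (Fin n) ℂ) (m : Fin r → ℕ)
    (hirr : ∀ k, Irreducible (g k)) (hm : ∀ k, 1 ≤ m k)
    (hna : ∀ k l, k ≠ l → ¬ Associated (g k) (g l)) :
    (IsWHomogeneous n w (∏ k, g k ^ m k) ↔ ∀ k, IsWHomogeneous n w (g k)) ∧
    (IsWHomogeneous n w (∏ k, g k ^ m k) ↔ IsWHomogeneous n w (∏ k, g k)) := by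
  have hg0 : ∀ k, g k ≠ 0 := fun k => (hirr k).ne_zero
  have h1 := WHomAux.main_aux w r g m hg0 hm
  have h2 := WHomAux.main_aux w r g (fun _ => 1) hg0 (fun _ => le_refl 1)
  simp only [pow_one] at h2
  exact ⟨h1, h1.trans h2.symm⟩
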